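/- For every integer n ≥ 1, the expected online domination number of the path satisfies the recurrence γ_o(P_n) = 1 + (2/n) · Σ_{i=1}^{n-2} γ_o(P_i). -/

import Mathlib

def pathGraph (n : ℕ) : SimpleGraph (Fin n) where
  Adj i j := (i : ℕ) + 1 = j ∨ (j : ℕ) + 1 = i
  symm := ⟨fun i j h => Or.symm h⟩
  loopless := ⟨fun i (h : (i : ℕ) + 1 = i ∨ (i : ℕ) + 1 = i) => by omega⟩

open Classical in
noncomputable def domList {V : Type*} [DecidableEq V] (G : SimpleGraph V) (l : List V) : Finset V :=
  l.foldl (fun D v => if ∃ w ∈ D, G.Adj w v then D else insert v D) ∅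

noncomputable def GammaSet (n : ℕ) (π : Equiv.Perm (Fin n)) : Finset (Fin n) :=
  domList (pathGraph n) (List.ofFn fun i => π i)

noncomputable def gamma (n : ℕ) (π : Equiv.Perm (Fin n)) : ℕ := (GammaSet n π).card

noncomputable def gammaOPath (n : ℕ) : ℝ :=
  (∑ π : Equiv.Perm (Fin n), (gamma n π : ℝ)) / (Nat.factorial n)

/-! ### The algorithm on lists of naturals -/

def adjN (a b : ℕ) : Prop := a + 1 = b ∨ b + 1 = a

open Classical in
noncomputable def stepN (D : Finset ℕ) (v : ℕ) : Finset ℕ :=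
  if ∃ w ∈ D, adjN w v then D else insert v D

noncomputable def g (l : List ℕ) : ℕ := (l.foldl stepN ∅).card

open Classical in
/-- Transfer from `Fin n` to `ℕ`. -/
lemma foldl_val (n : ℕ) (l : List (Fin n)) : ∀ D : Finset (Fin n),
    (l.map Fin.val).foldl stepN (D.image Fin.val)
      = (l.foldl (fun D v => if ∃ w ∈ D, (pathGraph n).Adj w v then D else insert v D) D).image Fin.val := by
  induction l with
  | nil => intro D; simp
  | cons v l ih =>
    intro D
    have hcond : (∃ w ∈ D.image Fin.val, adjN w v.val) ↔ ∃ w ∈ D, (pathGraph n).Adj w v := by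
      constructor
      · rintro ⟨w, hw, hadj⟩
        simp only [Finset.mem_image] at hw
        obtain ⟨u, hu, rfl⟩ := hw
        exact ⟨u, hu, hadj⟩
      · rintro ⟨w, hw, hadj⟩
        exact ⟨w.val, Finset.mem_image_of_mem _ hw, hadj⟩
    simp only [List.map_cons, List.foldl_cons, stepN]
    by_cases h : ∃ w ∈ D, (pathGraph n).Adj w v
    · rw [if_pos h, if_pos (hcond.mpr h), ih]
    · rw [if_neg h, if_neg (fun hc => h (hcond.mp hc))]
      have himg : insert (v.val) (D.image Fin.val) = (insert v D).image Fin.val := by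
        rw [Finset.image_insert]
      rw [himg, ih]

lemma gamma_eq (n : ℕ) (π : Equiv.Perm (Fin n)) :
    gamma n π = g (List.ofFn fun i => ((π i : Fin n) : ℕ)) := by
  have h := foldl_val n (List.ofFn fun i => π i) ∅
  simp only [Finset.image_empty] at h
  have heq : (List.ofFn fun i => ((π i : Fin n) : ℕ)) = (List.ofFn fun i => π i).map Fin.val := by
    rw [List.map_ofFn]; rfl
  rw [gamma, GammaSet, domList, g, heq, h,
    Finset.card_image_of_injective _ Fin.val_injective]
  convert rfl

/-- Shift invariance. -/
lemma foldl_shift (c : ℕ) (l : List ℕ) : ∀ D : Finset ℕ,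
    (l.map (· + c)).foldl stepN (D.image (· + c)) = (l.foldl stepN D).image (· + c) := by
  induction l with
  | nil => intro D; simp
  | cons v l ih =>
    intro D
    have hcond : (∃ w ∈ D.image (· + c), adjN w (v + c)) ↔ ∃ w ∈ D, adjN w v := by
      constructor
      · rintro ⟨w, hw, hadj⟩
        simp only [Finset.mem_image] at hw
        obtain ⟨u, hu, rfl⟩ := hw
        refine ⟨u, hu, ?_⟩
        unfold adjN at *; omega
      · rintro ⟨w, hw, hadj⟩
        refine ⟨w + c, Finset.mem_image_of_mem _ hw, ?_⟩
        unfold adjN at *; omega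
    simp only [List.map_cons, List.foldl_cons, stepN]
    by_cases h : ∃ w ∈ D, adjN w v
    · rw [if_pos h, if_pos (hcond.mpr h), ih]
    · rw [if_neg h, if_neg (fun hc => h (hcond.mp hc))]
      have himg : insert (v + c) (D.image (· + c)) = (insert v D).image (· + c) := by
        rw [Finset.image_insert]
      rw [himg, ih]

lemma add_c_inj (c : ℕ) : Function.Injective (· + c : ℕ → ℕ) := by
  intro a b h; simpa using h

lemma g_shift (c : ℕ) (l : List ℕ) : g (l.map (· + c)) = g l := by
  have h := foldl_shift c l ∅
  simp only [Finset.image_empty] at h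
  rw [g, g, h, Finset.card_image_of_injective _ (add_c_inj c)]

/-- Elements of the fold come from the accumulator or the list. -/
lemma foldl_mem (l : List ℕ) : ∀ D : Finset ℕ, ∀ x ∈ l.foldl stepN D, x ∈ D ∨ x ∈ l := by
  induction l with
  | nil => intro D x hx; exact Or.inl hx
  | cons v l ih =>
    intro D x hx
    simp only [List.foldl_cons] at hx
    rcases ih _ x hx with h | h
    · rw [stepN] at h
      split at h
      · exact Or.inl h
      · rcases Finset.mem_insert.mp h with h | h
        · exact Or.inr (by simp [h])
        · exact Or.inl h
    · exact Or.inr (List.mem_cons_of_mem _ h)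

/-- Key decomposition invariant. -/
lemma dec_aux (k : ℕ) : ∀ (l : List ℕ) (A B : Finset ℕ),
    (∀ a ∈ A, a + 1 < k) → (∀ b ∈ B, k + 1 < b) → k ∉ l →
    l.foldl stepN (insert k (A ∪ B))
      = insert k ((l.filter (fun v => v + 1 < k)).foldl stepN A
          ∪ (l.filter (fun v => k + 1 < v)).foldl stepN B) := by
  intro l
  induction l with
  | nil => intro A B _ _ _; simp
  | cons v l ih =>
    intro A B hA hB hk
    have hkv : v ≠ k := fun h => hk (by simp [h])
    have hkl : k ∉ l := fun h => hk (List.mem_cons_of_mem _ h)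
    simp only [List.foldl_cons, List.filter_cons, decide_eq_true_eq]
    by_cases hvL : v + 1 < k
    · -- left vertex
      have hcond : (∃ w ∈ insert k (A ∪ B), adjN w v) ↔ ∃ w ∈ A, adjN w v := by
        constructor
        · rintro ⟨w, hw, hadj⟩
          rcases Finset.mem_insert.mp hw with rfl | hw
          · exfalso; unfold adjN at hadj; omega
          · rcases Finset.mem_union.mp hw with h | h
            · exact ⟨w, h, hadj⟩
            · exfalso; have := hB w h; unfold adjN at hadj; omega
        · rintro ⟨w, hw, hadj⟩
          exact ⟨w, Finset.mem_insert_of_mem (Finset.mem_union_left _ hw), hadj⟩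
      have hnR : ¬ (k + 1 < v) := by omega
      rw [if_pos hvL, if_neg hnR]
      simp only [List.foldl_cons, stepN]
      by_cases h : ∃ w ∈ A, adjN w v
      · rw [if_pos (hcond.mpr h), if_pos h, ih A B hA hB hkl]
      · rw [if_neg (fun hc => h (hcond.mp hc)), if_neg h]
        have hswap : insert v (insert k (A ∪ B)) = insert k (insert v A ∪ B) := by
          ext x; simp only [Finset.mem_insert, Finset.mem_union]; tauto
        have hA' : ∀ a ∈ insert v A, a + 1 < k := by
          intro a ha
          rcases Finset.mem_insert.mp ha with rfl | ha
          · exact hvL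
          · exact hA a ha
        rw [hswap, ih (insert v A) B hA' hB hkl]
    · by_cases hvR : k + 1 < v
      · -- right vertex
        have hcond : (∃ w ∈ insert k (A ∪ B), adjN w v) ↔ ∃ w ∈ B, adjN w v := by
          constructor
          · rintro ⟨w, hw, hadj⟩
            rcases Finset.mem_insert.mp hw with rfl | hw
            · exfalso; unfold adjN at hadj; omega
            · rcases Finset.mem_union.mp hw with h | h
              · exfalso; have := hA w h; unfold adjN at hadj; omega
              · exact ⟨w, h, hadj⟩
          · rintro ⟨w, hw, hadj⟩
            exact ⟨w, Finset.mem_insert_of_mem (Finset.mem_union_right _ hw), hadj⟩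
        rw [if_pos hvR, if_neg hvL]
        simp only [List.foldl_cons, stepN]
        by_cases h : ∃ w ∈ B, adjN w v
        · rw [if_pos (hcond.mpr h), if_pos h, ih A B hA hB hkl]
        · rw [if_neg (fun hc => h (hcond.mp hc)), if_neg h]
          have hswap : insert v (insert k (A ∪ B)) = insert k (A ∪ insert v B) := by
            ext x; simp only [Finset.mem_insert, Finset.mem_union]; tauto
          have hB' : ∀ b ∈ insert v B, k + 1 < b := by
            intro b hb
            rcases Finset.mem_insert.mp hb with rfl | hb
            · exact hvR
            · exact hB b hb
          rw [hswap, ih A (insert v B) hA hB' hkl]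
      · -- v is k-1 or k+1: dominated by k, nothing changes
        have hadj : adjN k v := by unfold adjN; omega
        rw [if_neg hvL, if_neg hvR, stepN,
          if_pos ⟨k, Finset.mem_insert_self _ _, hadj⟩]
        exact ih A B hA hB hkl

lemma dec (k : ℕ) (l : List ℕ) (hk : k ∉ l) :
    g (k :: l) = 1 + g (l.filter (fun v => v + 1 < k)) + g (l.filter (fun v => k + 1 < v)) := by
  have hstart : stepN ∅ k = insert k ((∅ : Finset ℕ) ∪ ∅) := by
    rw [stepN, if_neg (by simp)]; simp
  have hmain := dec_aux k l ∅ ∅ (by simp) (by simp) hk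
  rw [g, List.foldl_cons, hstart, hmain]
  have hAmem : ∀ a ∈ (l.filter (fun v => v + 1 < k)).foldl stepN ∅, a + 1 < k := by
    intro a ha
    rcases foldl_mem _ _ a ha with h | h
    · simp at h
    · simpa using (List.of_mem_filter h)
  have hBmem : ∀ b ∈ (l.filter (fun v => k + 1 < v)).foldl stepN ∅, k + 1 < b := by
    intro b hb
    rcases foldl_mem _ _ b hb with h | h
    · simp at h
    · simpa using (List.of_mem_filter h)
  have hdisj : Disjoint ((l.filter (fun v => v + 1 < k)).foldl stepN ∅)
      ((l.filter (fun v => k + 1 < v)).foldl stepN ∅) := by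
    rw [Finset.disjoint_left]
    intro x hx hx'
    have := hAmem x hx; have := hBmem x hx'; omega
  have hknot : k ∉ ((l.filter (fun v => v + 1 < k)).foldl stepN ∅)
      ∪ ((l.filter (fun v => k + 1 < v)).foldl stepN ∅) := by
    intro h
    rcases Finset.mem_union.mp h with h | h
    · have := hAmem k h; omega
    · have := hBmem k h; omega
  rw [Finset.card_insert_of_notMem hknot, Finset.card_union_of_disjoint hdisj, g, g]
  omega
def phi {m : ℕ} (p : Fin (m + 1)) (j : Fin m) : Fin (m + 1) := Equiv.swap 0 p j.succ

lemma phi_inj {m : ℕ} (p : Fin (m + 1)) : Function.Injective (phi p) := by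
  intro a b h
  exact Fin.succ_injective _ ((Equiv.swap 0 p).injective h)

lemma phi_ne {m : ℕ} (p : Fin (m + 1)) (j : Fin m) : phi p j ≠ p := by
  intro h
  unfold phi at h
  have h0 : Equiv.swap 0 p j.succ = Equiv.swap 0 p 0 := by
    rw [Equiv.swap_apply_left]; exact h
  exact Fin.succ_ne_zero j ((Equiv.swap 0 p).injective h0)

lemma phi_image {m : ℕ} (p : Fin (m + 1)) :
    Finset.univ.image (phi p) = Finset.univ.erase p := by
  apply Finset.eq_of_subset_of_card_le
  · intro x hx
    simp only [Finset.mem_image] at hx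
    obtain ⟨j, _, rfl⟩ := hx
    exact Finset.mem_erase.mpr ⟨phi_ne p j, Finset.mem_univ _⟩
  · rw [Finset.card_erase_of_mem (Finset.mem_univ p),
      Finset.card_image_of_injective _ (phi_inj p)]
    simp

lemma range_eq {α β : Type*} [Fintype α] [DecidableEq β] (h : α → β) :
    Set.range h = ↑(Finset.univ.image h) := by
  ext x; simp

/-- Sums over permutations composed with injections having equal range agree. -/
lemma same_range_sum {a : ℕ} {β : Type*} (G : List ℕ → ℕ) (f : β → ℕ)
    (ι₁ ι₂ : Fin a → β) (h1 : Function.Injective ι₁) (h2 : Function.Injective ι₂)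
    (hr : Set.range ι₁ = Set.range ι₂) :
    ∑ σ : Equiv.Perm (Fin a), G (List.ofFn fun t => f (ι₁ (σ t)))
      = ∑ σ : Equiv.Perm (Fin a), G (List.ofFn fun t => f (ι₂ (σ t))) := by
  let τ : Equiv.Perm (Fin a) :=
    (Equiv.ofInjective ι₁ h1).trans ((Equiv.setCongr hr).trans (Equiv.ofInjective ι₂ h2).symm)
  have hτ : ∀ x, ι₂ (τ x) = ι₁ x := by
    intro x
    show ι₂ ((Equiv.ofInjective ι₂ h2).symm (Equiv.setCongr hr (Equiv.ofInjective ι₁ h1 x))) = ι₁ x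
    rw [Equiv.apply_ofInjective_symm h2]
    rfl
  exact Fintype.sum_bijective (fun σ => τ * σ) (Group.mulLeft_bijective τ) _ _
    (fun σ => by simp [Equiv.Perm.mul_apply, hτ])
noncomputable def Qfun {m b : ℕ} (G : List ℕ → ℕ) (f : Fin m → ℕ) (ι : Fin (b + 1) → Fin m)
    (t : Fin (b + 1)) : ℕ :=
  ∑ σ' : Equiv.Perm (Fin b), G (f (ι t) :: List.ofFn fun s => f (ι (phi t (σ' s))))

lemma S_expand {m b : ℕ} (G : List ℕ → ℕ) (f : Fin m → ℕ) (ι : Fin (b + 1) → Fin m) :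
    ∑ σ : Equiv.Perm (Fin (b + 1)), G (List.ofFn fun s => f (ι (σ s)))
      = ∑ t : Fin (b + 1), Qfun G f ι t := by
  rw [← Equiv.sum_comp Equiv.Perm.decomposeFin.symm
      (fun σ : Equiv.Perm (Fin (b + 1)) => G (List.ofFn fun s => f (ι (σ s)))),
    Fintype.sum_prod_type]
  apply Finset.sum_congr rfl
  intro t _
  apply Finset.sum_congr rfl
  intro σ' _
  congr 1
  rw [List.ofFn_succ]
  simp only [Equiv.Perm.decomposeFin_symm_apply_zero,
    Equiv.Perm.decomposeFin_symm_apply_succ, phi]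

/-- Rewriting the revealed list for a decomposed permutation. -/
lemma inner_rewrite {m : ℕ} (f : Fin (m + 1) → ℕ) (T : Finset (Fin (m + 1)))
    (p : Fin (m + 1)) (e : Equiv.Perm (Fin m)) :
    ((List.ofFn fun i => Equiv.Perm.decomposeFin.symm (p, e) i).filter
        (fun j => decide (j ∈ T))).map f
      = (if p ∈ T then [f p] else [])
          ++ ((List.ofFn fun i => e i).filter (fun j => decide (phi p j ∈ T))).map (f ∘ phi p) := by
  have h1 : (List.ofFn fun i => Equiv.Perm.decomposeFin.symm (p, e) i)
      = p :: ((List.ofFn fun i => e i).map (phi p)) := by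
    rw [List.ofFn_succ]
    simp only [Equiv.Perm.decomposeFin_symm_apply_zero,
      Equiv.Perm.decomposeFin_symm_apply_succ, List.map_ofFn]
    rfl
  rw [h1, List.filter_cons]
  have h2 : ((List.ofFn fun i => e i).map (phi p)).filter (fun j => decide (j ∈ T))
      = ((List.ofFn fun i => e i).filter (fun j => decide (phi p j ∈ T))).map (phi p) := by
    rw [List.filter_map]
    rfl
  by_cases hp : p ∈ T
  · rw [if_pos (by simpa using hp), if_pos hp, List.map_cons, h2, List.map_map,
      List.singleton_append]
  · rw [if_neg (by simpa using hp), if_neg hp, h2, List.map_map, List.nil_append]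
/-- The key counting lemma: each relative ordering of `T` is equally likely. -/
lemma count : ∀ (m : ℕ) (a : ℕ) (G : List ℕ → ℕ) (f : Fin m → ℕ) (T : Finset (Fin m))
    (ι : Fin a → Fin m), T.card = a → Function.Injective ι → (∀ t, ι t ∈ T) →
    a.factorial * ∑ e : Equiv.Perm (Fin m),
        G (((List.ofFn fun i => e i).filter (fun j => decide (j ∈ T))).map f)
      = m.factorial * ∑ σ : Equiv.Perm (Fin a), G (List.ofFn fun t => f (ι (σ t))) := by
  intro m
  induction m with
  | zero =>
    intro a G f T ι hT hι hmem
    have hT0 : T = ∅ := Finset.eq_empty_of_forall_notMem (fun x => x.elim0)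
    subst hT0
    have ha : a = 0 := by simpa using hT.symm
    subst ha
    have hfil : ∀ l : List (Fin 0), l.filter (fun j => decide (j ∈ (∅ : Finset (Fin 0)))) = [] := by
      intro l
      rw [List.filter_eq_nil_iff]
      intro x _
      simp
    simp [hfil]
  | succ m IH =>
    intro a G f T ι hT hι hmem
    have himg : Finset.univ.image ι = T := by
      apply Finset.eq_of_subset_of_card_le
      · intro x hx
        simp only [Finset.mem_image] at hx
        obtain ⟨t, _, rfl⟩ := hx
        exact hmem t
      · rw [hT, Finset.card_image_of_injective _ hι, Finset.card_univ, Fintype.card_fin]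
    rcases Nat.eq_zero_or_pos a with ha0 | hapos
    · subst ha0
      have hT0 : T = ∅ := Finset.card_eq_zero.mp hT
      subst hT0
      have hfil : ∀ l : List (Fin (m + 1)),
          l.filter (fun j => decide (j ∈ (∅ : Finset (Fin (m + 1))))) = [] := by
        intro l
        rw [List.filter_eq_nil_iff]
        intro x _
        simp
      simp [hfil, Finset.sum_const, Finset.card_univ, Fintype.card_perm, Fintype.card_fin,
        Nat.factorial]
    obtain ⟨b, rfl⟩ : ∃ k, a = k + 1 := ⟨a - 1, by omega⟩
    -- preimage sets
    have himgT' : ∀ p : Fin (m + 1),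
        (Finset.univ.filter (fun j => phi p j ∈ T)).image (phi p) = T.erase p := by
      intro p
      ext x
      simp only [Finset.mem_image, Finset.mem_filter, Finset.mem_univ, true_and,
        Finset.mem_erase]
      constructor
      · rintro ⟨j, hj, rfl⟩
        exact ⟨phi_ne p j, hj⟩
      · rintro ⟨hxp, hxT⟩
        have hx : x ∈ Finset.univ.image (phi p) := by
          rw [phi_image]
          exact Finset.mem_erase.mpr ⟨hxp, Finset.mem_univ _⟩
        simp only [Finset.mem_image] at hx
        obtain ⟨j, _, rfl⟩ := hx
        exact ⟨j, hxT, rfl⟩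
    have hcardT' : ∀ p : Fin (m + 1),
        (Finset.univ.filter (fun j => phi p j ∈ T)).card = (T.erase p).card := by
      intro p
      rw [← himgT' p, Finset.card_image_of_injective _ (phi_inj p)]
    -- rewrite the LHS sum via decomposeFin
    rw [← Equiv.sum_comp Equiv.Perm.decomposeFin.symm
        (fun e : Equiv.Perm (Fin (m + 1)) =>
          G (((List.ofFn fun i => e i).filter (fun j => decide (j ∈ T))).map f)),
      Fintype.sum_prod_type]
    -- keyOut : contribution of first vertices not in T
    have keyOut : ∀ p ∉ T, (b + 1).factorial * ∑ e : Equiv.Perm (Fin m),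
        G (((List.ofFn fun i => (Equiv.Perm.decomposeFin.symm (p, e)) i).filter
            (fun j => decide (j ∈ T))).map f)
        = m.factorial * ∑ σ : Equiv.Perm (Fin (b + 1)), G (List.ofFn fun t => f (ι (σ t))) := by
      intro p hp
      set T' : Finset (Fin m) := Finset.univ.filter (fun j => phi p j ∈ T) with hT'def
      have hcard : T'.card = b + 1 := by
        rw [hcardT' p, Finset.erase_eq_of_notMem hp, hT]
      set ι' : Fin (b + 1) → Fin m := fun t => ((T'.orderIsoOfFin hcard) t : Fin m) with hι'def
      have hι' : Function.Injective ι' := fun x y h =>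
        (T'.orderIsoOfFin hcard).injective (Subtype.ext h)
      have hmem' : ∀ t, ι' t ∈ T' := fun t => ((T'.orderIsoOfFin hcard) t).2
      have hIH := IH (b + 1) G (f ∘ phi p) T' ι' hcard hι' hmem'
      have hsum : (∑ e : Equiv.Perm (Fin m),
          G (((List.ofFn fun i => (Equiv.Perm.decomposeFin.symm (p, e)) i).filter
              (fun j => decide (j ∈ T))).map f))
          = ∑ e : Equiv.Perm (Fin m),
          G (((List.ofFn fun i => e i).filter (fun j => decide (j ∈ T'))).map (f ∘ phi p)) := by
        apply Finset.sum_congr rfl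
        intro e _
        congr 1
        rw [inner_rewrite f T p e, if_neg hp, List.nil_append]
        congr 2
        funext j
        simp [hT'def]
      rw [hsum, hIH]
      congr 1
      have hinj1 : Function.Injective (fun t => phi p (ι' t)) := fun x y h =>
        hι' (phi_inj p h)
      apply same_range_sum G f (fun t => phi p (ι' t)) ι hinj1 hι
      rw [range_eq, range_eq]
      have himgι' : Finset.univ.image ι' = T' := by
        apply Finset.eq_of_subset_of_card_le
        · intro x hx
          simp only [Finset.mem_image] at hx
          obtain ⟨t, _, rfl⟩ := hx
          exact hmem' t
        · rw [hcard, Finset.card_image_of_injective _ hι', Finset.card_univ, Fintype.card_fin]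
      have h1 : Finset.univ.image (fun t => phi p (ι' t)) = T'.image (phi p) := by
        rw [← himgι', Finset.image_image]
        rfl
      rw [h1, himgT' p, Finset.erase_eq_of_notMem hp, himg]
    -- keyIn : contribution of first vertices in T
    have keyIn : ∀ t : Fin (b + 1), (b + 1).factorial * ∑ e : Equiv.Perm (Fin m),
        G (((List.ofFn fun i => (Equiv.Perm.decomposeFin.symm (ι t, e)) i).filter
            (fun j => decide (j ∈ T))).map f)
        = m.factorial * ((b + 1) * Qfun G f ι t) := by
      intro t
      have hp : ι t ∈ T := hmem t
      set T' : Finset (Fin m) := Finset.univ.filter (fun j => phi (ι t) j ∈ T) with hT'def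
      have hcard : T'.card = b := by
        rw [hcardT' (ι t), Finset.card_erase_of_mem hp, hT]
        omega
      set ι' : Fin b → Fin m := fun s => ((T'.orderIsoOfFin hcard) s : Fin m) with hι'def
      have hι' : Function.Injective ι' := fun x y h =>
        (T'.orderIsoOfFin hcard).injective (Subtype.ext h)
      have hmem' : ∀ s, ι' s ∈ T' := fun s => ((T'.orderIsoOfFin hcard) s).2
      have hIH := IH b (fun l => G (f (ι t) :: l)) (f ∘ phi (ι t)) T' ι' hcard hι' hmem'
      have hsum : (∑ e : Equiv.Perm (Fin m),
          G (((List.ofFn fun i => (Equiv.Perm.decomposeFin.symm (ι t, e)) i).filter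
              (fun j => decide (j ∈ T))).map f))
          = ∑ e : Equiv.Perm (Fin m),
          G (f (ι t) :: ((List.ofFn fun i => e i).filter
              (fun j => decide (j ∈ T'))).map (f ∘ phi (ι t))) := by
        apply Finset.sum_congr rfl
        intro e _
        congr 1
        rw [inner_rewrite f T (ι t) e, if_pos hp, List.singleton_append]
        congr 3
        funext j
        simp [hT'def]
      rw [hsum, Nat.factorial_succ, mul_assoc, hIH]
      have hrel : (∑ σ' : Equiv.Perm (Fin b),
          G (f (ι t) :: List.ofFn fun s => (f ∘ phi (ι t)) (ι' (σ' s))))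
          = Qfun G f ι t := by
        unfold Qfun
        have hinj1 : Function.Injective (fun s => phi (ι t) (ι' s)) := fun x y h =>
          hι' (phi_inj (ι t) h)
        have hinj2 : Function.Injective (fun s => ι (phi t s)) := fun x y h =>
          phi_inj t (hι h)
        apply same_range_sum (fun l => G (f (ι t) :: l)) f
          (fun s => phi (ι t) (ι' s)) (fun s => ι (phi t s)) hinj1 hinj2
        rw [range_eq, range_eq]
        have himgι' : Finset.univ.image ι' = T' := by
          apply Finset.eq_of_subset_of_card_le
          · intro x hx
            simp only [Finset.mem_image] at hx
            obtain ⟨s, _, rfl⟩ := hx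
            exact hmem' s
          · rw [hcard, Finset.card_image_of_injective _ hι', Finset.card_univ, Fintype.card_fin]
        have h1 : Finset.univ.image (fun s => phi (ι t) (ι' s)) = T'.image (phi (ι t)) := by
          rw [← himgι', Finset.image_image]
          rfl
        have h2 : Finset.univ.image (fun s => ι (phi t s))
            = (Finset.univ.image (phi t)).image ι := by
          rw [Finset.image_image]
          rfl
        rw [h1, himgT' (ι t), h2, phi_image t, ← himg, Finset.image_erase hι]
      rw [hrel]
      ring
    -- assemble
    have hble : b + 1 ≤ m + 1 := by
      have h := Finset.card_le_univ T
      rw [hT] at h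
      simpa using h
    have hfilT : Finset.univ.filter (fun p : Fin (m + 1) => p ∈ T) = T := by
      ext x; simp
    have hcardnot : (Finset.univ.filter (fun p : Fin (m + 1) => p ∉ T)).card = m - b := by
      have h1 := Finset.card_filter_add_card_filter_not
        (s := (Finset.univ : Finset (Fin (m + 1)))) (p := fun p => p ∈ T)
      rw [hfilT, hT, Finset.card_univ, Fintype.card_fin] at h1
      omega
    have hsumT : ∀ F : Fin (m + 1) → ℕ, (∑ p ∈ T, F p) = ∑ t : Fin (b + 1), F (ι t) := by
      intro F
      rw [← himg, Finset.sum_image (fun x _ y _ h => hι h)]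
    rw [← Finset.sum_filter_add_sum_filter_not Finset.univ (fun p : Fin (m + 1) => p ∈ T)
        (fun p => ∑ e : Equiv.Perm (Fin m),
          G (((List.ofFn fun i => (Equiv.Perm.decomposeFin.symm (p, e)) i).filter
              (fun j => decide (j ∈ T))).map f)),
      Nat.mul_add, Finset.mul_sum, Finset.mul_sum, hfilT, hsumT]
    have h1 : (∑ t : Fin (b + 1), (b + 1).factorial * ∑ e : Equiv.Perm (Fin m),
        G (((List.ofFn fun i => (Equiv.Perm.decomposeFin.symm (ι t, e)) i).filter
            (fun j => decide (j ∈ T))).map f))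
        = ∑ t : Fin (b + 1), m.factorial * ((b + 1) * Qfun G f ι t) :=
      Finset.sum_congr rfl (fun t _ => keyIn t)
    have h2 : (∑ p ∈ Finset.univ.filter (fun p : Fin (m + 1) => p ∉ T),
        (b + 1).factorial * ∑ e : Equiv.Perm (Fin m),
        G (((List.ofFn fun i => (Equiv.Perm.decomposeFin.symm (p, e)) i).filter
            (fun j => decide (j ∈ T))).map f))
        = ∑ p ∈ Finset.univ.filter (fun p : Fin (m + 1) => p ∉ T),
          m.factorial * ∑ σ : Equiv.Perm (Fin (b + 1)), G (List.ofFn fun t => f (ι (σ t))) :=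
      Finset.sum_congr rfl (fun p hp => keyOut p (Finset.mem_filter.mp hp).2)
    rw [h1, h2, Finset.sum_const, hcardnot, smul_eq_mul, ← Finset.mul_sum, ← Finset.mul_sum,
      ← S_expand G f ι]
    have hc : (m - b) + (b + 1) = m + 1 := by omega
    rw [Nat.factorial_succ]
    set S := ∑ σ : Equiv.Perm (Fin (b + 1)), G (List.ofFn fun t => f (ι (σ t)))
    calc m.factorial * ((b + 1) * S) + (m - b) * (m.factorial * S)
        = ((m - b) + (b + 1)) * (m.factorial * S) := by ring
      _ = (m + 1) * (m.factorial * S) := by rw [hc]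
      _ = (m + 1) * m.factorial * S := by ring
noncomputable def A (i : ℕ) : ℕ := ∑ σ : Equiv.Perm (Fin i), gamma i σ

lemma gOP_eq (i : ℕ) : gammaOPath i = (A i : ℝ) / (i.factorial : ℝ) := by
  rw [gammaOPath, A]
  push_cast
  rfl

lemma gammaOPath_zero : gammaOPath 0 = 0 := by
  have h : ∀ σ : Equiv.Perm (Fin 0), gamma 0 σ = 0 := by
    intro σ
    rw [gamma, GammaSet, domList]
    simp
  simp [gammaOPath, h]

def iotaL (m k : ℕ) (hkm : k ≤ m) : Fin (k - 1) → Fin m := fun t =>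
  ⟨if (t : ℕ) = 0 then k - 1 else (t : ℕ) - 1, by
    have := t.2; split_ifs <;> omega⟩

lemma iotaL_val (m k : ℕ) (hkm : k ≤ m) (t : Fin (k - 1)) :
    ((iotaL m k hkm t : Fin m) : ℕ) = if (t : ℕ) = 0 then k - 1 else (t : ℕ) - 1 := rfl

def iotaR (m k : ℕ) : Fin (m - k - 1) → Fin m := fun t =>
  ⟨(t : ℕ) + k + 1, by have := t.2; omega⟩

lemma iotaR_val (m k : ℕ) (t : Fin (m - k - 1)) :
    ((iotaR m k t : Fin m) : ℕ) = (t : ℕ) + k + 1 := rfl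

lemma perP (m : ℕ) (p : Fin (m + 1)) :
    (∑ e : Equiv.Perm (Fin m), (gamma (m + 1) (Equiv.Perm.decomposeFin.symm (p, e)) : ℝ))
      = (m.factorial : ℝ) * (1 + gammaOPath ((p : ℕ) - 1) + gammaOPath (m - (p : ℕ) - 1)) := by
  set k := (p : ℕ) with hk
  have hkm : k ≤ m := by have := p.2; omega
  set fp : Fin m → ℕ := fun j => ((phi p j : Fin (m + 1)) : ℕ) with hfp
  have hfp_formula : ∀ j : Fin m, fp j = if (j : ℕ) + 1 = k then 0 else (j : ℕ) + 1 := by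
    intro j
    have hfpj : fp j = ((Equiv.swap 0 p) j.succ : Fin (m + 1)).val := rfl
    rcases eq_or_ne j.succ p with h2 | h2
    · have hjk : (j : ℕ) + 1 = k := by rw [hk, ← h2, Fin.val_succ]
      rw [hfpj, h2, Equiv.swap_apply_right, if_pos hjk, Fin.val_zero]
    · have hjk : (j : ℕ) + 1 ≠ k := by
        intro hc
        exact h2 (Fin.ext (by rw [Fin.val_succ, hc, hk]))
      rw [hfpj, Equiv.swap_apply_of_ne_of_ne (Fin.succ_ne_zero j) h2, if_neg hjk, Fin.val_succ]
  have hfp_inj : Function.Injective fp := by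
    intro x y h
    exact (phi_inj p) (Fin.val_injective h)
  set TL : Finset (Fin m) := Finset.univ.filter (fun j => fp j + 1 < k) with hTL
  set TR : Finset (Fin m) := Finset.univ.filter (fun j => k + 1 < fp j) with hTR
  -- left injection facts
  have haL : ∀ t : Fin (k - 1), fp (iotaL m k hkm t) = (t : ℕ) := by
    intro t
    have ht := t.2
    rw [hfp_formula, iotaL_val]
    split_ifs <;> omega
  have hinjL : Function.Injective (iotaL m k hkm) := by
    intro x y h
    apply Fin.ext
    rw [← haL x, ← haL y, h]
  have hmemL : ∀ t, iotaL m k hkm t ∈ TL := by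
    intro t
    have ht := t.2
    simp only [hTL, Finset.mem_filter, Finset.mem_univ, true_and]
    rw [haL]
    omega
  have himgL : Finset.univ.image (iotaL m k hkm) = TL := by
    ext j
    simp only [Finset.mem_image, Finset.mem_univ, true_and, hTL, Finset.mem_filter]
    constructor
    · rintro ⟨t, rfl⟩
      rw [haL]
      have := t.2; omega
    · intro hj
      rw [hfp_formula] at hj
      by_cases hc : (j : ℕ) + 1 = k
      · rw [if_pos hc] at hj
        refine ⟨⟨0, by omega⟩, ?_⟩
        apply Fin.ext
        rw [iotaL_val]
        show (if (0 : ℕ) = 0 then k - 1 else 0 - 1) = (j : ℕ)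
        rw [if_pos rfl]
        omega
      · rw [if_neg hc] at hj
        refine ⟨⟨(j : ℕ) + 1, by omega⟩, ?_⟩
        apply Fin.ext
        rw [iotaL_val]
        show (if ((j : ℕ) + 1 : ℕ) = 0 then k - 1 else ((j : ℕ) + 1) - 1) = (j : ℕ)
        rw [if_neg (by omega)]
        omega
  have hcardL : TL.card = k - 1 := by
    rw [← himgL, Finset.card_image_of_injective _ hinjL, Finset.card_univ, Fintype.card_fin]
  -- right injection facts
  have haR : ∀ t : Fin (m - k - 1), fp (iotaR m k t) = (t : ℕ) + k + 2 := by
    intro t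
    rw [hfp_formula, iotaR_val]
    rw [if_neg (by omega)]
  have hinjR : Function.Injective (iotaR m k) := by
    intro x y h
    apply Fin.ext
    have hx := haR x
    have hy := haR y
    rw [h] at hx
    omega
  have hmemR : ∀ t, iotaR m k t ∈ TR := by
    intro t
    simp only [hTR, Finset.mem_filter, Finset.mem_univ, true_and]
    rw [haR]
    omega
  have himgR : Finset.univ.image (iotaR m k) = TR := by
    ext j
    simp only [Finset.mem_image, Finset.mem_univ, true_and, hTR, Finset.mem_filter]
    constructor
    · rintro ⟨t, rfl⟩
      rw [haR]
      omega
    · intro hj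
      rw [hfp_formula] at hj
      by_cases hc : (j : ℕ) + 1 = k
      · rw [if_pos hc] at hj
        omega
      · rw [if_neg hc] at hj
        have hjb := j.2
        refine ⟨⟨(j : ℕ) - k - 1, by omega⟩, ?_⟩
        apply Fin.ext
        rw [iotaR_val]
        show ((j : ℕ) - k - 1) + k + 1 = (j : ℕ)
        omega
  have hcardR : TR.card = m - k - 1 := by
    rw [← himgR, Finset.card_image_of_injective _ hinjR, Finset.card_univ, Fintype.card_fin]
  -- counting lemma applications
  have countL := count m (k - 1) g fp TL (iotaL m k hkm) hcardL hinjL hmemL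
  have countR := count m (m - k - 1) g fp TR (iotaR m k) hcardR hinjR hmemR
  have hgamL : (∑ σ : Equiv.Perm (Fin (k - 1)), g (List.ofFn fun t => fp (iotaL m k hkm (σ t))))
      = A (k - 1) := by
    rw [A]
    apply Finset.sum_congr rfl
    intro σ _
    rw [gamma_eq]
    exact congrArg g (congrArg List.ofFn (funext fun t => haL (σ t)))
  have hgamR : (∑ σ : Equiv.Perm (Fin (m - k - 1)), g (List.ofFn fun t => fp (iotaR m k (σ t))))
      = A (m - k - 1) := by
    rw [A]
    apply Finset.sum_congr rfl
    intro σ _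
    have h1 : (List.ofFn fun t => fp (iotaR m k (σ t)))
        = (List.ofFn fun t => ((σ t : Fin (m - k - 1)) : ℕ)).map (· + (k + 2)) := by
      rw [List.map_ofFn]
      exact congrArg List.ofFn (funext fun t => by
        show fp (iotaR m k (σ t)) = ((σ t : Fin (m - k - 1)) : ℕ) + (k + 2)
        rw [haR (σ t)]
        omega)
    rw [h1, g_shift, gamma_eq]
  rw [hgamL] at countL
  rw [hgamR] at countR
  -- decompose each gamma
  have hgam : ∀ e : Equiv.Perm (Fin m),
      gamma (m + 1) (Equiv.Perm.decomposeFin.symm (p, e))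
        = 1 + g (((List.ofFn fun i => e i).filter (fun j => decide (j ∈ TL))).map fp)
            + g (((List.ofFn fun i => e i).filter (fun j => decide (j ∈ TR))).map fp) := by
    intro e
    rw [gamma_eq]
    have hlist : (List.ofFn fun i => ((Equiv.Perm.decomposeFin.symm (p, e) i : Fin (m + 1)) : ℕ))
        = k :: ((List.ofFn fun i => e i).map fp) := by
      rw [List.ofFn_succ]
      congr 1
      · rw [Equiv.Perm.decomposeFin_symm_apply_zero]
      · rw [List.map_ofFn]
        exact congrArg List.ofFn (funext fun i => by
          show ((Equiv.Perm.decomposeFin.symm (p, e) i.succ : Fin (m + 1)) : ℕ) = fp (e i)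
          rw [Equiv.Perm.decomposeFin_symm_apply_succ]
          rfl)
    have hknotin : k ∉ ((List.ofFn fun i => e i).map fp) := by
      simp only [List.mem_map]
      rintro ⟨x, _, hx⟩
      exact phi_ne p x (Fin.val_injective hx)
    rw [hlist, dec k _ hknotin]
    have hfL : ((List.ofFn fun i => e i).map fp).filter (fun v => decide (v + 1 < k))
        = ((List.ofFn fun i => e i).filter (fun j => decide (j ∈ TL))).map fp := by
      rw [List.filter_map]
      apply congrArg (List.map fp)
      apply List.filter_congr
      intro j _
      show decide (fp j + 1 < k) = decide (j ∈ TL)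
      simp [hTL]
    have hfR : ((List.ofFn fun i => e i).map fp).filter (fun v => decide (k + 1 < v))
        = ((List.ofFn fun i => e i).filter (fun j => decide (j ∈ TR))).map fp := by
      rw [List.filter_map]
      apply congrArg (List.map fp)
      apply List.filter_congr
      intro j _
      show decide (k + 1 < fp j) = decide (j ∈ TR)
      simp [hTR]
    rw [hfL, hfR]
  have hsplit : (∑ e : Equiv.Perm (Fin m), gamma (m + 1) (Equiv.Perm.decomposeFin.symm (p, e)))
      = m.factorial
        + ((∑ e : Equiv.Perm (Fin m),
            g (((List.ofFn fun i => e i).filter (fun j => decide (j ∈ TL))).map fp))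
        + (∑ e : Equiv.Perm (Fin m),
            g (((List.ofFn fun i => e i).filter (fun j => decide (j ∈ TR))).map fp))) := by
    rw [Finset.sum_congr rfl (fun e _ => hgam e), Finset.sum_add_distrib, Finset.sum_add_distrib,
      Finset.sum_const, Finset.card_univ, Fintype.card_perm, Fintype.card_fin, smul_eq_mul,
      mul_one, add_assoc]
  have hcast : (∑ e : Equiv.Perm (Fin m), (gamma (m + 1) (Equiv.Perm.decomposeFin.symm (p, e)) : ℝ))
      = ((∑ e : Equiv.Perm (Fin m), gamma (m + 1) (Equiv.Perm.decomposeFin.symm (p, e)) : ℕ) : ℝ) := by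
    push_cast
    rfl
  rw [hcast, hsplit]
  push_cast
  rw [gOP_eq, gOP_eq]
  have hfl : (((k - 1).factorial : ℕ) : ℝ) ≠ 0 := Nat.cast_ne_zero.mpr (Nat.factorial_ne_zero _)
  have hfr : (((m - k - 1).factorial : ℕ) : ℝ) ≠ 0 := Nat.cast_ne_zero.mpr (Nat.factorial_ne_zero _)
  have hALr := congrArg (fun x : ℕ => (x : ℝ)) countL
  have hARr := congrArg (fun x : ℕ => (x : ℝ)) countR
  push_cast at hALr hARr
  field_simp
  ring_nf
  ring_nf at hALr hARr
  linear_combination (((m - k - 1).factorial : ℕ) : ℝ) * hALr + (((k - 1).factorial : ℕ) : ℝ) * hARr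
theorem expected_online_domination_recurrence (n : ℕ) (hn : 1 ≤ n) :
    gammaOPath n = 1 + (2 / (n : ℝ)) * ∑ i ∈ Finset.Icc 1 (n - 2), gammaOPath i := by
  obtain ⟨m, rfl⟩ : ∃ m, n = m + 1 := ⟨n - 1, by omega⟩
  have hIcc : (∑ j ∈ Finset.range m, gammaOPath j)
      = ∑ i ∈ Finset.Icc 1 (m + 1 - 2), gammaOPath i := by
    rcases Nat.eq_zero_or_pos m with rfl | hm
    · simp
    · have h1 : Finset.Icc 1 (m + 1 - 2) = Finset.Ico 1 m := by
        rw [show m + 1 - 2 = m - 1 by omega, ← Finset.Ico_add_one_right_eq_Icc]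
        congr 1
        omega
      rw [h1, Finset.range_eq_Ico, ← Finset.sum_Ico_consecutive _ (Nat.zero_le 1) hm]
      have h0 : (∑ j ∈ Finset.Ico 0 1, gammaOPath j) = 0 := by
        simp [gammaOPath_zero]
      rw [h0, zero_add]
  have hA : ((A (m + 1) : ℕ) : ℝ)
      = (m.factorial : ℝ) * ((m + 1 : ℝ) + 2 * ∑ j ∈ Finset.range m, gammaOPath j) := by
    have h1 : ((A (m + 1) : ℕ) : ℝ) = ∑ π : Equiv.Perm (Fin (m + 1)), (gamma (m + 1) π : ℝ) := by
      rw [A]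
      push_cast
      rfl
    rw [h1, ← Equiv.sum_comp Equiv.Perm.decomposeFin.symm
        (fun π : Equiv.Perm (Fin (m + 1)) => (gamma (m + 1) π : ℝ)), Fintype.sum_prod_type]
    rw [Finset.sum_congr rfl (fun p _ => perP m p), ← Finset.mul_sum]
    congr 1
    rw [Fin.sum_univ_eq_sum_range
      (fun k => 1 + gammaOPath (k - 1) + gammaOPath (m - k - 1)) (m + 1)]
    rw [Finset.sum_add_distrib, Finset.sum_add_distrib, Finset.sum_const, Finset.card_range]
    have hL : (∑ k ∈ Finset.range (m + 1), gammaOPath (k - 1))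
        = ∑ j ∈ Finset.range m, gammaOPath j := by
      rw [Finset.sum_range_succ' (fun k => gammaOPath (k - 1)) m]
      simp [gammaOPath_zero]
    have hR : (∑ k ∈ Finset.range (m + 1), gammaOPath (m - k - 1))
        = ∑ j ∈ Finset.range m, gammaOPath j := by
      rw [Finset.sum_range_succ (fun k => gammaOPath (m - k - 1)) m]
      rw [show m - m - 1 = 0 by omega, gammaOPath_zero, add_zero]
      have hc : (∑ k ∈ Finset.range m, gammaOPath (m - k - 1))
          = ∑ k ∈ Finset.range m, gammaOPath (m - 1 - k) :=
        Finset.sum_congr rfl (fun k _ => by congr 1; omega)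
      rw [hc, Finset.sum_range_reflect]
    rw [hL, hR]
    push_cast
    ring
  rw [gOP_eq, hA, ← hIcc, Nat.factorial_succ]
  have h2 : (m.factorial : ℝ) ≠ 0 := Nat.cast_ne_zero.mpr (Nat.factorial_ne_zero _)
  have h3 : ((m : ℝ) + 1) ≠ 0 := by positivity
  push_cast
  field_simp
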